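/- (Preliminary regularity lemma.) For every positive integer n, every m > 0, every ε > 0 and every growth function F there exists C = C(n, ε, m, F) > 0 with the following property. Let V = (J, (V_j)_{j∈J}, d, H_d) be a hypergraph system with |J| ≤ n, and for each e ∈ H_d let B_e ⊆ A_e be a σ-algebra with complex(B_e) ≤ m. Then there exists M with F(m) ≤ M ≤ C, and for each f ∈ ∂H_d there exist σ-algebras B_f ⊆ B'_f ⊆ A_f, such that: complex(B_f) ≤ M for all f ∈ ∂H_d; ℰ_{E_e}(∨_{f∈∂e} B'_f) − ℰ_{E_e}(∨_{f∈∂e} B_f) ≤ ε² for all e ∈ H_d and all E_e ∈ B_e; and Δ_e(E_e | ∨_{f∈∂e} B'_f) ≤ 1/F(M) for all e ∈ H_d and all E_e ∈ B_e. -/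

import Mathlib

open scoped Classical BigOperators MeasureTheory

noncomputable section

/-- Average of a real-valued function over a finite type. -/
def avg {α : Type*} [Fintype α] (f : α → ℝ) : ℝ :=
  (∑ x, f x) / (Fintype.card α)

/-- Real-valued indicator function of a set. -/
def ind {α : Type*} (E : Set α) (x : α) : ℝ := if x ∈ E then 1 else 0

/-- Average of `f` over the set `A`. -/
def avgOn {α : Type*} [Fintype α] (A : Set α) (f : α → ℝ) : ℝ :=
  (∑ x ∈ Finset.univ.filter (· ∈ A), f x) / ((Finset.univ.filter (· ∈ A)).card)

/-- The smallest set of the σ-algebra `m` containing `x`. -/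
def atomAt {α : Type*} (m : MeasurableSpace α) (x : α) : Set α :=
  ⋂₀ {s | MeasurableSet[m] s ∧ x ∈ s}

/-- Conditional expectation: the average of `f` over the smallest `m`-set containing `x`. -/
def cexp {α : Type*} [Fintype α] (m : MeasurableSpace α) (f : α → ℝ) (x : α) : ℝ :=
  avgOn (atomAt m x) f

/-- The `E`-energy of a σ-algebra. -/
def energy {α : Type*} [Fintype α] (E : Set α) (m : MeasurableSpace α) : ℝ :=
  avg (fun x => (cexp m (ind E) x) ^ 2)

/-- Complexity: the least number of sets needed to generate `m` as a σ-algebra. -/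
def complexity {α : Type*} (m : MeasurableSpace α) : ℕ :=
  sInf {n | ∃ S : Finset (Set α), S.card = n ∧ MeasurableSpace.generateFrom (↑S : Set (Set α)) = m}

/-- The σ-algebra `A_e` of sets depending only on the coordinates indexed by `e`. -/
def cylAlg {J : Type*} (V : J → Type*) (e : Finset J) : MeasurableSpace (∀ j, V j) :=
  MeasurableSpace.comap (fun x (j : e) => x j.1) ⊤

/-- The skeleton `∂e = {f ⊊ e : |f| = |e| - 1}`. -/
def skel {J : Type*} (e : Finset J) : Finset (Finset J) :=
  e.image (fun j => e.erase j)

/-- The boundary `∂H` of a hypergraph. -/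
def hbd {J : Type*} (H : Finset (Finset J)) : Finset (Finset J) :=
  H.biUnion skel

/-- The `e`-discrepancy of `E` relative to the σ-algebra `m`. -/
def disc {J : Type*} [Fintype J] (V : J → Type*) [∀ j, Fintype (V j)]
    (e : Finset J) (E : Set (∀ j, V j)) (m : MeasurableSpace (∀ j, V j)) : ℝ :=
  sSup { r | ∃ Ef : Finset J → Set (∀ j, V j),
    (∀ f ∈ skel e, MeasurableSet[cylAlg V f] (Ef f)) ∧
    r = |avg (fun x => (ind E x - cexp m (ind E) x) * ∏ f ∈ skel e, ind (Ef f) x)| }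

/-- A growth function: increasing on positives and at least `1 + x`. -/
def IsGrowth (F : ℝ → ℝ) : Prop :=
  (∀ x y, 0 < x → x < y → F x < F y) ∧ ∀ x, 0 < x → 1 + x ≤ F x

/-- An atom of a σ-algebra on a finite set: a minimal non-empty measurable set. -/
def IsAtomOf {α : Type*} (m : MeasurableSpace α) (A : Set α) : Prop :=
  MeasurableSet[m] A ∧ A.Nonempty ∧ ∀ s, MeasurableSet[m] s → s ⊆ A → s = ∅ ∨ s = A

end

set_option linter.unusedSectionVars false
set_option maxHeartbeats 1000000

section Aux

open MeasurableSpace Finset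

variable {α : Type*} [Fintype α]

lemma mem_atomAt_self (m : MeasurableSpace α) (x : α) : x ∈ atomAt m x :=
  fun _ hs => hs.2

lemma atomAt_subset {m : MeasurableSpace α} {s : Set α} (hs : MeasurableSet[m] s) {x : α}
    (hx : x ∈ s) : atomAt m x ⊆ s := Set.sInter_subset_of_mem ⟨hs, hx⟩

lemma mem_iff_of_mem_atomAt {m : MeasurableSpace α} {x y : α} (h : y ∈ atomAt m x)
    {s : Set α} (hs : MeasurableSet[m] s) : (y ∈ s ↔ x ∈ s) := by
  constructor
  · intro hy
    by_contra hx
    exact (atomAt_subset hs.compl hx h) hy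
  · intro hx
    exact atomAt_subset hs hx h

lemma mem_atomAt_symm {m : MeasurableSpace α} {x y : α} (h : y ∈ atomAt m x) :
    x ∈ atomAt m y :=
  fun _ hs => (mem_iff_of_mem_atomAt h hs.1).mp hs.2

lemma atomAt_eq {m : MeasurableSpace α} {x y : α} (h : y ∈ atomAt m x) :
    atomAt m y = atomAt m x := by
  apply Set.Subset.antisymm
  · exact Set.subset_sInter fun s hs =>
      atomAt_subset hs.1 ((mem_iff_of_mem_atomAt h hs.1).mpr hs.2)
  · exact Set.subset_sInter fun s hs =>
      atomAt_subset hs.1 ((mem_iff_of_mem_atomAt (mem_atomAt_symm h) hs.1).mpr hs.2)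

lemma atomAt_anti {m m' : MeasurableSpace α} (hm : m ≤ m') (x : α) :
    atomAt m' x ⊆ atomAt m x :=
  Set.sInter_subset_sInter (fun s hs => ⟨hm s hs.1, hs.2⟩)

/-- `g` is constant on the atoms of `m`. -/
def ConstOn (m : MeasurableSpace α) (g : α → ℝ) : Prop :=
  ∀ x y, y ∈ atomAt m x → g y = g x

lemma ConstOn.mono {m m' : MeasurableSpace α} (hm : m ≤ m') {g : α → ℝ}
    (hg : ConstOn m g) : ConstOn m' g :=
  fun x y hy => hg x y (atomAt_anti hm x hy)

lemma constOn_ind {m : MeasurableSpace α} {E : Set α} (hE : MeasurableSet[m] E) :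
    ConstOn m (ind E) := by
  intro x y hy
  simp only [ind]
  by_cases hx : x ∈ E
  · simp [hx, atomAt_subset hE hx hy]
  · have : y ∉ E := fun hy' => hx ((mem_iff_of_mem_atomAt hy hE).mp hy')
    simp [hx, this]

lemma constOn_cexp (m : MeasurableSpace α) (f : α → ℝ) : ConstOn m (cexp m f) := by
  intro x y hy
  simp only [cexp]
  rw [atomAt_eq hy]

lemma constOn_one (m : MeasurableSpace α) : ConstOn m (fun _ => (1:ℝ)) := fun _ _ _ => rfl

lemma constOn_prod {m : MeasurableSpace α} {ι : Type*} (s : Finset ι) (g : ι → α → ℝ)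
    (hg : ∀ i ∈ s, ConstOn m (g i)) : ConstOn m (fun x => ∏ i ∈ s, g i x) := by
  intro x y hy
  exact Finset.prod_congr rfl (fun i hi => hg i hi x y hy)

lemma cexp_congr_atom {m : MeasurableSpace α} {x y : α} (h : y ∈ atomAt m x) (f : α → ℝ) :
    cexp m f y = cexp m f x := constOn_cexp m f x y h

end Aux
section Aux2

open MeasurableSpace Finset

variable {α : Type*} [Fintype α]

lemma avg_sub (f g : α → ℝ) : avg (fun x => f x - g x) = avg f - avg g := by
  simp only [avg, ← sub_div, ← Finset.sum_sub_distrib]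

lemma avg_mul_left (r : ℝ) (f : α → ℝ) : avg (fun x => r * f x) = r * avg f := by
  simp only [avg, ← Finset.mul_sum, mul_div_assoc]

lemma avg_congr {f g : α → ℝ} (h : ∀ x, f x = g x) : avg f = avg g := by
  simp only [avg]
  rw [Finset.sum_congr rfl (fun x _ => h x)]

lemma avg_nonneg {f : α → ℝ} (h : ∀ x, 0 ≤ f x) : 0 ≤ avg f :=
  div_nonneg (Finset.sum_nonneg fun x _ => h x) (Nat.cast_nonneg _)

lemma avg_le_one {f : α → ℝ} (h : ∀ x, f x ≤ 1) : avg f ≤ 1 := by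
  rcases isEmpty_or_nonempty α with hα | hα
  · simp [avg, Finset.univ_eq_empty]
  · rw [avg, div_le_one (by exact_mod_cast Fintype.card_pos)]
    calc ∑ x, f x ≤ ∑ _x : α, (1:ℝ) := Finset.sum_le_sum fun x _ => h x
    _ = Fintype.card α := by simp

/-- Key orthogonality: `f - cexp m f` is orthogonal to functions constant on atoms of `m`. -/
lemma sum_sub_cexp (m : MeasurableSpace α) (f g : α → ℝ) (hg : ConstOn m g) :
    ∑ x, (f x - cexp m f x) * g x = 0 := by
  classical
  rw [← Finset.sum_fiberwise_of_maps_to (g := fun y => atomAt m y)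
      (t := Finset.univ.image (fun y => atomAt m y))
      (fun x _ => Finset.mem_image_of_mem _ (Finset.mem_univ x))
      (fun x => (f x - cexp m f x) * g x)]
  apply Finset.sum_eq_zero
  intro A hA
  obtain ⟨x0, -, rfl⟩ := Finset.mem_image.mp hA
  have hfil : Finset.univ.filter (fun y => atomAt m y = atomAt m x0)
      = Finset.univ.filter (· ∈ atomAt m x0) := by
    ext y
    simp only [Finset.mem_filter, Finset.mem_univ, true_and]
    constructor
    · intro h; rw [← h]; exact mem_atomAt_self m y
    · intro h; exact atomAt_eq h
  rw [hfil]
  set s := Finset.univ.filter (· ∈ atomAt m x0) with hs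
  have hx0 : x0 ∈ s := by simp [hs, mem_atomAt_self]
  have hcard : (0:ℝ) < s.card := by exact_mod_cast Finset.card_pos.mpr ⟨x0, hx0⟩
  have h1 : ∀ y ∈ s, (f y - cexp m f y) * g y = (f y - avgOn (atomAt m x0) f) * g x0 := by
    intro y hy
    have hymem : y ∈ atomAt m x0 := (Finset.mem_filter.mp hy).2
    rw [hg x0 y hymem, cexp_congr_atom hymem, cexp]
  rw [Finset.sum_congr rfl h1]
  have havg : avgOn (atomAt m x0) f = (∑ y ∈ s, f y) / s.card := rfl
  have : ∑ y ∈ s, (f y - avgOn (atomAt m x0) f) * g x0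
      = (∑ y ∈ s, f y - s.card * avgOn (atomAt m x0) f) * g x0 := by
    rw [← Finset.sum_mul, Finset.sum_sub_distrib, Finset.sum_const, nsmul_eq_mul]
  rw [this, havg]
  field_simp
  simp

lemma avg_sub_cexp (m : MeasurableSpace α) (f g : α → ℝ) (hg : ConstOn m g) :
    avg (fun x => (f x - cexp m f x) * g x) = 0 := by
  rw [avg, sum_sub_cexp m f g hg, zero_div]

lemma cexp_ind_nonneg (m : MeasurableSpace α) (E : Set α) (x : α) :
    0 ≤ cexp m (ind E) x :=
  div_nonneg (Finset.sum_nonneg fun y _ => by unfold ind; positivity) (Nat.cast_nonneg _)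

lemma cexp_ind_le_one (m : MeasurableSpace α) (E : Set α) (x : α) :
    cexp m (ind E) x ≤ 1 := by
  rw [cexp, avgOn]
  set s := Finset.univ.filter (· ∈ atomAt m x) with hs
  have hx : x ∈ s := by simp [hs, mem_atomAt_self]
  have hcard : (0:ℝ) < s.card := by exact_mod_cast Finset.card_pos.mpr ⟨x, hx⟩
  rw [div_le_one hcard]
  calc ∑ y ∈ s, ind E y ≤ ∑ _y ∈ s, (1:ℝ) :=
        Finset.sum_le_sum fun y _ => by unfold ind; split <;> norm_num
  _ = s.card := by simp

lemma energy_nonneg (E : Set α) (m : MeasurableSpace α) : 0 ≤ energy E m :=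
  avg_nonneg fun x => sq_nonneg _

lemma energy_le_one (E : Set α) (m : MeasurableSpace α) : energy E m ≤ 1 :=
  avg_le_one fun x => by
    have h0 := cexp_ind_nonneg m E x
    have h1 := cexp_ind_le_one m E x
    nlinarith

/-- Energy difference identity. -/
lemma energy_diff_eq {m m' : MeasurableSpace α} (hm : m ≤ m') (E : Set α) :
    energy E m' - energy E m
      = avg (fun x => (cexp m' (ind E) x - cexp m (ind E) x) ^ 2) := by
  set c := cexp m (ind E) with hc
  set c' := cexp m' (ind E) with hc'
  have hConc : ConstOn m' c := (constOn_cexp m (ind E)).mono hm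
  have h1 : avg (fun x => (ind E x - c' x) * c x) = 0 :=
    avg_sub_cexp m' (ind E) c hConc
  have h2 : avg (fun x => (ind E x - c x) * c x) = 0 :=
    avg_sub_cexp m (ind E) c (constOn_cexp m (ind E))
  have key : avg (fun x => (c' x - c x) * c x) = 0 := by
    have hfe : (fun x => (c' x - c x) * c x)
        = fun x => (ind E x - c x) * c x - (ind E x - c' x) * c x := by
      funext x; ring
    rw [hfe, avg_sub, h1, h2, sub_zero]
  have hsq : (fun x => (c' x - c x) ^ 2)
      = fun x => (c' x ^ 2 - c x ^ 2) - 2 * ((c' x - c x) * c x) := by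
    funext x; ring
  rw [hsq, avg_sub, avg_mul_left, key, mul_zero, sub_zero, avg_sub]
  rfl

lemma energy_mono {m m' : MeasurableSpace α} (hm : m ≤ m') (E : Set α) :
    energy E m ≤ energy E m' := by
  have := energy_diff_eq hm E
  have h := avg_nonneg (f := fun x => (cexp m' (ind E) x - cexp m (ind E) x) ^ 2)
    (fun x => sq_nonneg _)
  linarith

/-- Cauchy–Schwarz for averages. -/
lemma avg_mul_sq_le (h g : α → ℝ) :
    (avg (fun x => h x * g x)) ^ 2 ≤ avg (fun x => h x ^ 2) * avg (fun x => g x ^ 2) := by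
  rcases isEmpty_or_nonempty α with hα | hα
  · simp [avg, Finset.univ_eq_empty]
  · have hκ : (0:ℝ) < ((Fintype.card α : ℝ)) ^ 2 := by
      have : (0:ℝ) < Fintype.card α := by exact_mod_cast Fintype.card_pos
      positivity
    simp only [avg]
    rw [div_pow, div_mul_div_comm, ← sq]
    rw [div_le_div_iff_of_pos_right hκ]
    exact Finset.sum_mul_sq_le_sq_mul_sq _ _ _

/-- Energy increment from a correlation witness. -/
lemma energy_increment {m m' : MeasurableSpace α} (hm : m ≤ m') {E : Set α} {g : α → ℝ}
    (hg : ConstOn m' g) (hg1 : ∀ x, |g x| ≤ 1) {η : ℝ} (hη : 0 ≤ η)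
    (hcor : η ≤ |avg (fun x => (ind E x - cexp m (ind E) x) * g x)|) :
    energy E m + η ^ 2 ≤ energy E m' := by
  set c := cexp m (ind E) with hc
  set c' := cexp m' (ind E) with hc'
  have h0 : avg (fun x => (ind E x - c' x) * g x) = 0 := avg_sub_cexp m' (ind E) g hg
  have hsplit : avg (fun x => (ind E x - c x) * g x)
      = avg (fun x => (c' x - c x) * g x) := by
    have hfe : (fun x => (ind E x - c x) * g x)
        = fun x => (ind E x - c' x) * g x + (c' x - c x) * g x := by
      funext x; ring
    have := avg_sub (fun x => (ind E x - c x) * g x) (fun x => (c' x - c x) * g x)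
    rw [hfe]
    have : (fun x => (ind E x - c' x) * g x + (c' x - c x) * g x)
        = fun x => (ind E x - c' x) * g x - (-((c' x - c x) * g x)) := by
      funext x; ring
    rw [this, avg_sub, h0, zero_sub]
    have : avg (fun x => -((c' x - c x) * g x)) = -avg (fun x => (c' x - c x) * g x) := by
      have := avg_mul_left (-1) (fun x => (c' x - c x) * g x)
      simpa using this
    rw [this, neg_neg]
  have hcs : (avg (fun x => (c' x - c x) * g x)) ^ 2
      ≤ avg (fun x => (c' x - c x) ^ 2) * avg (fun x => g x ^ 2) :=
    avg_mul_sq_le _ _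
  have hgsq : avg (fun x => g x ^ 2) ≤ 1 :=
    avg_le_one fun x => by
      have := hg1 x
      nlinarith [abs_nonneg (g x), sq_abs (g x)]
  have hgsq0 : 0 ≤ avg (fun x => g x ^ 2) := avg_nonneg fun x => sq_nonneg _
  have hXsq : η ^ 2 ≤ (avg (fun x => (c' x - c x) * g x)) ^ 2 := by
    rw [hsplit] at hcor
    calc η ^ 2 ≤ |avg (fun x => (c' x - c x) * g x)| ^ 2 := by
          apply pow_le_pow_left₀ hη hcor
    _ = _ := sq_abs _
  have hdiff := energy_diff_eq hm E
  have hvar0 : 0 ≤ avg (fun x => (c' x - c x) ^ 2) := avg_nonneg fun x => sq_nonneg _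
  nlinarith [hcs, hXsq, hgsq, hgsq0, hvar0]

end Aux2
section Aux3

open MeasurableSpace Finset

variable {α : Type*}

lemma complexity_le_of_generateFrom {m : MeasurableSpace α} (S : Finset (Set α))
    (h : generateFrom (↑S : Set (Set α)) = m) : complexity m ≤ S.card :=
  Nat.sInf_le ⟨S, rfl, h⟩

lemma complexity_bot : complexity (⊥ : MeasurableSpace α) = 0 := by
  have h : generateFrom (↑(∅ : Finset (Set α)) : Set (Set α)) = (⊥ : MeasurableSpace α) := by
    apply le_antisymm
    · apply generateFrom_le; simp
    · exact bot_le
  simpa using complexity_le_of_generateFrom ∅ h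

lemma complexity_exists [Fintype α] (m : MeasurableSpace α) :
    ∃ S : Finset (Set α), S.card = complexity m ∧ generateFrom (↑S : Set (Set α)) = m := by
  classical
  have hne : {n | ∃ S : Finset (Set α), S.card = n ∧ generateFrom (↑S : Set (Set α)) = m}.Nonempty := by
    refine ⟨_, Finset.univ.filter (fun t : Set α => MeasurableSet[m] t), rfl, ?_⟩
    apply le_antisymm
    · apply generateFrom_le
      intro t ht
      simpa using ht
    · intro s hs
      exact measurableSet_generateFrom (by simp [hs])
  have := Nat.sInf_mem hne
  obtain ⟨S, hS, hgen⟩ := this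
  exact ⟨S, hS, hgen⟩

lemma complexity_sup_single [Fintype α] (m : MeasurableSpace α) (E : Set α) :
    complexity (m ⊔ generateFrom {E}) ≤ complexity m + 1 := by
  classical
  obtain ⟨S, hcard, hgen⟩ := complexity_exists m
  have hg : generateFrom (↑(insert E S) : Set (Set α)) = m ⊔ generateFrom {E} := by
    rw [Finset.coe_insert, Set.insert_eq, ← generateFrom_sup_generateFrom, hgen, sup_comm]
  calc complexity (m ⊔ generateFrom {E}) ≤ (insert E S).card :=
        complexity_le_of_generateFrom _ hg
  _ ≤ S.card + 1 := Finset.card_insert_le _ _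
  _ = complexity m + 1 := by rw [hcard]

lemma card_measurableSet_le [Fintype α] (m : MeasurableSpace α) (k : ℕ)
    (h : complexity m ≤ k) :
    (Finset.univ.filter (fun t : Set α => MeasurableSet[m] t)).card ≤ 2 ^ (2 ^ k) := by
  classical
  obtain ⟨S, hcard, hgen⟩ := complexity_exists m
  set σ : α → (↥S → Prop) := fun x s => x ∈ (s : Set α) with hσ
  have hle : m ≤ MeasurableSpace.comap σ ⊤ := by
    rw [← hgen]
    apply generateFrom_le
    intro t ht
    refine ⟨{f | f ⟨t, ht⟩}, trivial, ?_⟩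
    rfl
  have himg : Finset.univ.filter (fun t : Set α => MeasurableSet[m] t)
      ⊆ Finset.univ.image (fun T : Set (↥S → Prop) => σ ⁻¹' T) := by
    intro t ht
    have ht' : MeasurableSet[MeasurableSpace.comap σ ⊤] t := hle t (by simpa using ht)
    obtain ⟨T, -, hT⟩ := ht'
    exact Finset.mem_image.mpr ⟨T, Finset.mem_univ T, hT⟩
  calc (Finset.univ.filter (fun t : Set α => MeasurableSet[m] t)).card
      ≤ (Finset.univ.image (fun T : Set (↥S → Prop) => σ ⁻¹' T)).card :=
        Finset.card_le_card himg
  _ ≤ (Finset.univ : Finset (Set (↥S → Prop))).card := Finset.card_image_le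
  _ = 2 ^ (2 ^ S.card) := by
      rw [Finset.card_univ, Fintype.card_set, Fintype.card_fun, Fintype.card_prop,
        Fintype.card_coe]
  _ ≤ 2 ^ (2 ^ k) := by
      apply Nat.pow_le_pow_right (by norm_num)
      apply Nat.pow_le_pow_right (by norm_num)
      omega

end Aux3
section Hyper

open MeasurableSpace Finset

lemma ind_nonneg {α : Type*} (E : Set α) (x : α) : 0 ≤ ind E x := by
  unfold ind; split <;> norm_num

lemma ind_le_one {α : Type*} (E : Set α) (x : α) : ind E x ≤ 1 := by
  unfold ind; split <;> norm_num

lemma sum_add_le_of_mem {β : Type*} {A : Finset β} {u v : β → ℝ} {b : β} (hb : b ∈ A)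
    (h : ∀ x ∈ A, u x ≤ v x) {η : ℝ} (hbv : u b + η ≤ v b) :
    (∑ x ∈ A, u x) + η ≤ ∑ x ∈ A, v x := by
  rw [← Finset.sum_erase_add A u hb, ← Finset.sum_erase_add A v hb]
  have h2 : ∑ x ∈ A.erase b, u x ≤ ∑ x ∈ A.erase b, v x :=
    Finset.sum_le_sum (fun x hx => h x (Finset.mem_of_mem_erase hx))
  linarith

variable {J : Type} [Fintype J] {V : J → Type} [∀ j, Fintype (V j)] [∀ j, Nonempty (V j)]

/-- Total energy functional. -/
noncomputable def Phi (H : Finset (Finset J)) (Be B : Finset J → MeasurableSpace (∀ j, V j)) : ℝ :=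
  ∑ e ∈ H, ∑ s ∈ Finset.univ.filter (fun t : Set (∀ j, V j) => MeasurableSet[Be e] t),
    energy s (⨆ f ∈ skel e, B f)

/-- All correlation values are at most `η`. -/
def SmallDisc (H : Finset (Finset J)) (Be B' : Finset J → MeasurableSpace (∀ j, V j))
    (η : ℝ) : Prop :=
  ∀ e ∈ H, ∀ E : Set (∀ j, V j), MeasurableSet[Be e] E →
  ∀ Ef : Finset J → Set (∀ j, V j), (∀ f ∈ skel e, MeasurableSet[cylAlg V f] (Ef f)) →
  |avg (fun x => (ind E x - cexp (⨆ f ∈ skel e, B' f) (ind E) x) *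
      ∏ f ∈ skel e, ind (Ef f) x)| ≤ η

lemma Phi_nonneg (H : Finset (Finset J)) (Be B : Finset J → MeasurableSpace (∀ j, V j)) :
    0 ≤ Phi H Be B :=
  Finset.sum_nonneg fun e _ => Finset.sum_nonneg fun s _ => energy_nonneg _ _

lemma Phi_le (H : Finset (Finset J)) (Be B : Finset J → MeasurableSpace (∀ j, V j))
    (k : ℕ) (hBe : ∀ e ∈ H, complexity (Be e) ≤ k) :
    Phi H Be B ≤ (H.card : ℝ) * 2 ^ (2 ^ k) := by
  have hinner : ∀ e ∈ H,
      ∑ s ∈ Finset.univ.filter (fun t : Set (∀ j, V j) => MeasurableSet[Be e] t),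
        energy s (⨆ f ∈ skel e, B f) ≤ (2:ℝ) ^ (2 ^ k) := by
    intro e he
    calc ∑ s ∈ Finset.univ.filter (fun t : Set (∀ j, V j) => MeasurableSet[Be e] t),
          energy s (⨆ f ∈ skel e, B f)
        ≤ ∑ _s ∈ Finset.univ.filter (fun t : Set (∀ j, V j) => MeasurableSet[Be e] t),
          (1:ℝ) := Finset.sum_le_sum fun s _ => energy_le_one _ _
    _ = ((Finset.univ.filter (fun t : Set (∀ j, V j) => MeasurableSet[Be e] t)).card : ℝ) := by
        simp
    _ ≤ ((2 ^ (2 ^ k) : ℕ) : ℝ) := by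
        exact_mod_cast card_measurableSet_le (Be e) k (hBe e he)
    _ = (2:ℝ) ^ (2 ^ k) := by push_cast; ring
  calc Phi H Be B ≤ ∑ _e ∈ H, (2:ℝ) ^ (2 ^ k) := Finset.sum_le_sum hinner
  _ = (H.card : ℝ) * 2 ^ (2 ^ k) := by rw [Finset.sum_const, nsmul_eq_mul]

lemma Phi_mono (H : Finset (Finset J)) (Be B B' : Finset J → MeasurableSpace (∀ j, V j))
    (h : ∀ f, B f ≤ B' f) : Phi H Be B ≤ Phi H Be B' :=
  Finset.sum_le_sum fun e _ => Finset.sum_le_sum fun s _ =>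
    energy_mono (iSup_mono fun f => iSup_mono fun _ => h f) _

/-- The inner loop: refine until all discrepancies are small. -/
lemma inner_loop (H : Finset (Finset J)) (Be : Finset J → MeasurableSpace (∀ j, V j))
    (Φmax : ℝ) (hΦmax : ∀ B : Finset J → MeasurableSpace (∀ j, V j), Phi H Be B ≤ Φmax)
    (η : ℝ) (hη : 0 < η) (n : ℕ) :
    ∀ B : Finset J → MeasurableSpace (∀ j, V j), (∀ f, B f ≤ cylAlg V f) →
    Φmax < Phi H Be B + n * η ^ 2 →
    ∃ B', (∀ f, B f ≤ B' f) ∧ (∀ f, B' f ≤ cylAlg V f) ∧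
      (∀ f, complexity (B' f) ≤ complexity (B f) + n) ∧ SmallDisc H Be B' η := by
  induction n with
  | zero =>
    intro B _ hΦ
    exact absurd (hΦmax B) (by push_cast at hΦ; linarith)
  | succ n ih =>
    intro B hBle hΦ
    by_cases hsd : SmallDisc H Be B η
    · exact ⟨B, fun f => le_rfl, hBle, fun f => by omega, hsd⟩
    · unfold SmallDisc at hsd
      push_neg at hsd
      obtain ⟨e, he, E, hE, Ef, hEf, hcorr⟩ := hsd
      set B1 : Finset J → MeasurableSpace (∀ j, V j) :=
        fun f => if f ∈ skel e then B f ⊔ generateFrom {Ef f} else B f with hB1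
      have hB1le : ∀ f, B f ≤ B1 f := by
        intro f
        by_cases h : f ∈ skel e <;> simp [hB1, h]
      have hB1cyl : ∀ f, B1 f ≤ cylAlg V f := by
        intro f
        by_cases h : f ∈ skel e
        · simp only [hB1, if_pos h]
          refine sup_le (hBle f) (generateFrom_le ?_)
          intro t ht
          rw [Set.mem_singleton_iff] at ht
          subst ht
          exact hEf f h
        · simpa [hB1, h] using hBle f
      have hcompl : ∀ f, complexity (B1 f) ≤ complexity (B f) + 1 := by
        intro f
        by_cases h : f ∈ skel e
        · simpa [hB1, h] using complexity_sup_single (B f) (Ef f)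
        · simp [hB1, h]
      have hmm' : (⨆ f ∈ skel e, B f) ≤ ⨆ f ∈ skel e, B1 f :=
        iSup_mono fun f => iSup_mono fun _ => hB1le f
      set g : (∀ j, V j) → ℝ := fun x => ∏ f ∈ skel e, ind (Ef f) x with hgdef
      have hgConst : ConstOn (⨆ f ∈ skel e, B1 f) g := by
        apply constOn_prod
        intro f hf
        apply constOn_ind
        have h1 : MeasurableSet[generateFrom {Ef f}] (Ef f) :=
          measurableSet_generateFrom rfl
        have h2 : generateFrom {Ef f} ≤ B1 f := by
          simp only [hB1, if_pos hf]
          exact le_sup_right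
        have h3 : B1 f ≤ ⨆ f ∈ skel e, B1 f :=
          le_iSup₂ (f := fun f (_ : f ∈ skel e) => B1 f) f hf
        exact h3 _ (h2 _ h1)
      have hg1 : ∀ x, |g x| ≤ 1 := by
        intro x
        rw [abs_le]
        constructor
        · have : (0:ℝ) ≤ g x := Finset.prod_nonneg fun f _ => ind_nonneg _ _
          linarith
        · exact Finset.prod_le_one (fun f _ => ind_nonneg _ _) (fun f _ => ind_le_one _ _)
      have hener : energy E (⨆ f ∈ skel e, B f) + η ^ 2 ≤ energy E (⨆ f ∈ skel e, B1 f) :=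
        energy_increment hmm' hgConst hg1 (le_of_lt hη) (le_of_lt hcorr)
      have hΦstep : Phi H Be B + η ^ 2 ≤ Phi H Be B1 := by
        unfold Phi
        apply sum_add_le_of_mem he
        · intro e' _
          exact Finset.sum_le_sum fun s _ =>
            energy_mono (iSup_mono fun f => iSup_mono fun _ => hB1le f) _
        · apply sum_add_le_of_mem (b := E)
          · simp [hE]
          · intro s _
            exact energy_mono hmm' _
          · exact hener
      obtain ⟨B', hB'1, hB'cyl, hB'compl, hB'sd⟩ := ih B1 hB1cyl (by push_cast at hΦ ⊢; linarith)
      refine ⟨B', fun f => (hB1le f).trans (hB'1 f), hB'cyl, fun f => ?_, hB'sd⟩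
      have := hB'compl f
      have := hcompl f
      omega

end Hyper
section Outer

open MeasurableSpace Finset

/-- Number of inner steps. -/
noncomputable def Nsteps (Φmax : ℝ) (F : ℝ → ℝ) (M : ℝ) : ℕ := ⌈Φmax * (F M) ^ 2⌉₊ + 1

/-- Complexity growth in one outer step. -/
noncomputable def nextM (Φmax : ℝ) (F : ℝ → ℝ) (M : ℝ) : ℝ := M + Nsteps Φmax F M

lemma le_nextM (Φmax : ℝ) (F : ℝ → ℝ) (M : ℝ) : M ≤ nextM Φmax F M :=
  le_add_of_nonneg_right (by positivity)

lemma le_iterate_nextM (Φmax : ℝ) (F : ℝ → ℝ) (k : ℕ) (M : ℝ) :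
    M ≤ (nextM Φmax F)^[k] M := by
  induction k generalizing M with
  | zero => simp
  | succ k ih =>
    rw [Function.iterate_succ_apply]
    exact (le_nextM Φmax F M).trans (ih (nextM Φmax F M))

variable {J : Type} [Fintype J] {V : J → Type} [∀ j, Fintype (V j)] [∀ j, Nonempty (V j)]

lemma outer_loop (H : Finset (Finset J)) (Be : Finset J → MeasurableSpace (∀ j, V j))
    (Φmax : ℝ) (hΦmax : ∀ B : Finset J → MeasurableSpace (∀ j, V j), Phi H Be B ≤ Φmax)
    (F : ℝ → ℝ) (hF : ∀ x : ℝ, 0 < x → 1 + x ≤ F x)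
    (m ε : ℝ) (hm : 0 < m) (hε : 0 < ε) (T : ℕ) :
    ∀ (B : Finset J → MeasurableSpace (∀ j, V j)) (M : ℝ),
    (∀ f, B f ≤ cylAlg V f) → F m ≤ M →
    (∀ f, (complexity (B f) : ℝ) ≤ M) →
    Φmax < Phi H Be B + T * ε ^ 2 →
    ∃ M' : ℝ, M ≤ M' ∧ M' ≤ (nextM Φmax F)^[T] M ∧
    ∃ Bc B' : Finset J → MeasurableSpace (∀ j, V j),
      (∀ f, Bc f ≤ B' f) ∧ (∀ f, B' f ≤ cylAlg V f) ∧
      (∀ f, (complexity (Bc f) : ℝ) ≤ M') ∧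
      (∀ e ∈ H, ∀ E : Set (∀ j, V j), MeasurableSet[Be e] E →
        energy E (⨆ f ∈ skel e, B' f) - energy E (⨆ f ∈ skel e, Bc f) ≤ ε ^ 2) ∧
      SmallDisc H Be B' (1 / F M') := by
  induction T with
  | zero =>
    intro B M _ _ _ hΦ
    exact absurd (hΦmax B) (by push_cast at hΦ; linarith)
  | succ T ih =>
    intro B M hcyl hFmM hcompl hΦ
    have hM0 : 0 < M := lt_of_lt_of_le (by linarith [hF m hm]) hFmM
    have hFM : 0 < F M := lt_of_lt_of_le (by linarith) (hF M hM0)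
    set η : ℝ := 1 / F M with hηdef
    have hη : 0 < η := by positivity
    set n : ℕ := Nsteps Φmax F M with hndef
    have hn1 : Φmax * (F M) ^ 2 + 1 ≤ (n : ℝ) := by
      rw [hndef, Nsteps]
      push_cast
      have := Nat.le_ceil (Φmax * (F M) ^ 2)
      linarith
    have hηsq : η ^ 2 * (F M) ^ 2 = 1 := by
      rw [hηdef]
      field_simp
    have hinner0 : Φmax < Phi H Be B + n * η ^ 2 := by
      have hP := Phi_nonneg H Be B
      nlinarith [sq_nonneg (F M), sq_nonneg η]
    obtain ⟨B', hB'1, hB'cyl, hB'compl, hB'sd⟩ :=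
      inner_loop H Be Φmax hΦmax η hη n B hcyl hinner0
    by_cases hgap : ∀ e ∈ H, ∀ E : Set (∀ j, V j), MeasurableSet[Be e] E →
        energy E (⨆ f ∈ skel e, B' f) - energy E (⨆ f ∈ skel e, B f) ≤ ε ^ 2
    · exact ⟨M, le_rfl, le_iterate_nextM Φmax F (T + 1) M,
        B, B', hB'1, hB'cyl, hcompl, hgap, hB'sd⟩
    · push_neg at hgap
      obtain ⟨e, he, E, hE, hgt⟩ := hgap
      have hΦgap : Phi H Be B + ε ^ 2 ≤ Phi H Be B' := by
        unfold Phi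
        apply sum_add_le_of_mem he
        · intro e' _
          exact Finset.sum_le_sum fun s _ =>
            energy_mono (iSup_mono fun f => iSup_mono fun _ => hB'1 f) _
        · apply sum_add_le_of_mem (b := E)
          · simp [hE]
          · intro s _
            exact energy_mono (iSup_mono fun f => iSup_mono fun _ => hB'1 f) _
          · linarith
      have hrec := ih B' (nextM Φmax F M) hB'cyl (hFmM.trans (le_nextM Φmax F M))
        (by
          intro f
          have h1 := hB'compl f
          have h2 := hcompl f
          rw [nextM]
          calc (complexity (B' f) : ℝ) ≤ (complexity (B f) : ℝ) + n := by exact_mod_cast h1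
          _ ≤ M + n := by linarith)
        (by push_cast at hΦ ⊢; linarith)
      obtain ⟨M', hMle, hM'le, rest⟩ := hrec
      refine ⟨M', (le_nextM Φmax F M).trans hMle, ?_, rest⟩
      rw [Function.iterate_succ_apply]
      exact hM'le

end Outer

/-- **Preliminary regularity lemma.**
For every `n`, `m > 0`, `ε > 0` and growth function `F` there is `C = C(n, ε, m, F)` such
that: given σ-algebras `B_e ⊆ A_e` (`e ∈ H_d`) of complexity at most `m`, there exist
`M` with `F(m) ≤ M ≤ C` and σ-algebras `B_f ⊆ B'_f ⊆ A_f` (`f ∈ ∂H_d`) such that the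
coarse `B_f` have complexity at most `M`, the energies of the fine and the coarse joins
differ by at most `ε²` on every set of every `B_e`, and every set of every `B_e` has
discrepancy at most `1/F(M)` with respect to the fine join. -/
theorem preliminary_regularity_lemma :
    ∀ n : ℕ, 0 < n → ∀ m ε : ℝ, 0 < m → 0 < ε → ∀ F : ℝ → ℝ, IsGrowth F →
    ∃ C : ℝ, 0 < C ∧
    ∀ (J : Type) [Fintype J], Fintype.card J ≤ n →
    ∀ (V : J → Type) [∀ j, Fintype (V j)] [∀ j, Nonempty (V j)]
      (d : ℕ), 1 ≤ d →
    ∀ (H : Finset (Finset J)), (∀ e ∈ H, e.card = d) →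
    ∀ (Be : Finset J → MeasurableSpace (∀ j, V j)),
      (∀ e ∈ H, Be e ≤ cylAlg V e ∧ (complexity (Be e) : ℝ) ≤ m) →
    ∃ M : ℝ, F m ≤ M ∧ M ≤ C ∧
    ∃ B B' : Finset J → MeasurableSpace (∀ j, V j),
      (∀ f ∈ hbd H, B f ≤ B' f ∧ B' f ≤ cylAlg V f ∧ (complexity (B f) : ℝ) ≤ M) ∧
      (∀ e ∈ H, ∀ E : Set (∀ j, V j), MeasurableSet[Be e] E →
        energy E (⨆ f ∈ skel e, B' f) - energy E (⨆ f ∈ skel e, B f) ≤ ε ^ 2 ∧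
        disc V e E (⨆ f ∈ skel e, B' f) ≤ 1 / F M) := by
  intro n hn m ε hm hε F hF
  obtain ⟨hFmono, hFge⟩ := hF
  set Φmax : ℝ := (2:ℝ) ^ n * 2 ^ (2 ^ (Nat.floor m)) with hΦmaxdef
  set T₀ : ℕ := ⌈Φmax / ε ^ 2⌉₊ + 1 with hT₀def
  set C : ℝ := (nextM Φmax F)^[T₀] (F m) with hCdef
  have hFm : 1 + m ≤ F m := hFge m hm
  have hFm0 : 0 < F m := by linarith
  refine ⟨C, lt_of_lt_of_le hFm0 (le_iterate_nextM Φmax F T₀ (F m)), ?_⟩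
  intro J _ hJ V _ _ d hd H hH Be hBe
  have hΦmax : ∀ B : Finset J → MeasurableSpace (∀ j, V j), Phi H Be B ≤ Φmax := by
    intro B
    have h1 : Phi H Be B ≤ (H.card : ℝ) * 2 ^ (2 ^ (Nat.floor m)) := by
      apply Phi_le
      intro e he
      exact Nat.le_floor (hBe e he).2
    have h2 : (H.card : ℝ) ≤ (2:ℝ) ^ n := by
      have hc : H.card ≤ 2 ^ n := by
        calc H.card ≤ Fintype.card (Finset J) := Finset.card_le_univ H
        _ = 2 ^ Fintype.card J := Fintype.card_finset
        _ ≤ 2 ^ n := Nat.pow_le_pow_right (by norm_num) hJ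
      exact_mod_cast hc
    have h3 : (0:ℝ) ≤ 2 ^ (2 ^ (Nat.floor m)) := by positivity
    calc Phi H Be B ≤ (H.card : ℝ) * 2 ^ (2 ^ (Nat.floor m)) := h1
    _ ≤ (2:ℝ) ^ n * 2 ^ (2 ^ (Nat.floor m)) := by nlinarith
    _ = Φmax := rfl
  have hstart : Φmax < Phi H Be (fun _ => (⊥ : MeasurableSpace (∀ j, V j))) + T₀ * ε ^ 2 := by
    have hP := Phi_nonneg H Be (fun _ => (⊥ : MeasurableSpace (∀ j, V j)))
    have hceil : Φmax / ε ^ 2 ≤ (⌈Φmax / ε ^ 2⌉₊ : ℝ) := Nat.le_ceil _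
    have hε2 : (0:ℝ) < ε ^ 2 := by positivity
    have : Φmax < ((⌈Φmax / ε ^ 2⌉₊ : ℝ) + 1) * ε ^ 2 := by
      have h4 : Φmax = (Φmax / ε ^ 2) * ε ^ 2 := by field_simp
      nlinarith
    rw [hT₀def]
    push_cast
    linarith
  obtain ⟨M', hM'ge, hM'le, Bc, B', hBcB', hB'cyl, hBccompl, hgap, hsd⟩ :=
    outer_loop H Be Φmax hΦmax F hFge m ε hm hε T₀
      (fun _ => (⊥ : MeasurableSpace (∀ j, V j))) (F m)
      (fun f => bot_le) le_rfl
      (fun f => by rw [complexity_bot]; exact_mod_cast le_of_lt hFm0)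
      hstart
  refine ⟨M', hM'ge, le_trans hM'le (le_of_eq hCdef.symm), Bc, B',
    fun f _ => ⟨hBcB' f, hB'cyl f, hBccompl f⟩, ?_⟩
  intro e he E hE
  refine ⟨(hgap e he E hE), ?_⟩
  -- discrepancy bound via csSup_le
  apply csSup_le
  · exact ⟨_, ⟨fun _ => (∅ : Set (∀ j, V j)), fun f _ => @MeasurableSet.empty _ (cylAlg V f), rfl⟩⟩
  · rintro r ⟨Ef, hEf, rfl⟩
    exact hsd e he E hE Ef hEf
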